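/- Under the contextual-bandit off-policy setup with N ≥ 1 i.i.d. logged samples and any measurable weight function φ, the mean squared error of the UIPS estimator is upper bounded as: E_D[(V̂_UIPS(π) − V(π))²] ≤ E_{β*}[ (π(a|x)/β*(a|x))² r(x,a)² ] · E_{β*}[ ( (β*(a|x)/β̂(a|x)) φ(x,a) − 1 )² ] + E_{β*}[ (π(a|x)/β̂(a|x))² φ(x,a)² ]. -/

import Mathlib

open MeasureTheory

private lemma my_integrable_mul {α : Type*} [MeasurableSpace α] {μ : Measure α}
    {u v : α → ℝ} (hu : MemLp u 2 μ) (hv : MemLp v 2 μ) :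
    Integrable (fun z => u z * v z) μ := by
  refine ((hu.integrable_sq.add hv.integrable_sq).const_mul (1/2)).mono'
    (hu.aestronglyMeasurable.mul hv.aestronglyMeasurable)
    (Filter.Eventually.of_forall fun z => ?_)
  have h1 : |u z * v z| ≤ (u z ^ 2 + v z ^ 2) / 2 := by
    rw [abs_mul]
    nlinarith [sq_nonneg (|u z| - |v z|), sq_abs (u z), sq_abs (v z),
      abs_nonneg (u z), abs_nonneg (v z)]
  simp only [Real.norm_eq_abs]
  calc |u z * v z| ≤ (u z ^ 2 + v z ^ 2) / 2 := h1
    _ = 1 / 2 * (u z ^ 2 + v z ^ 2) := by ring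

private lemma my_cauchy_schwarz {α : Type*} [MeasurableSpace α] {μ : Measure α}
    {u v : α → ℝ} (hu : MemLp u 2 μ) (hv : MemLp v 2 μ) :
    (∫ z, u z * v z ∂μ) ^ 2 ≤ (∫ z, u z ^ 2 ∂μ) * (∫ z, v z ^ 2 ∂μ) := by
  have h2 : ENNReal.ofReal (2:ℝ) = 2 := by norm_num
  have hconj : Real.HolderConjugate 2 2 := Real.HolderConjugate.two_two
  have hun : MemLp (fun z => |u z|) (ENNReal.ofReal 2) μ := by rw [h2]; simpa using hu.norm
  have hvn : MemLp (fun z => |v z|) (ENNReal.ofReal 2) μ := by rw [h2]; simpa using hv.norm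
  have hH := integral_mul_le_Lp_mul_Lq_of_nonneg hconj
    (Filter.Eventually.of_forall fun z => abs_nonneg (u z))
    (Filter.Eventually.of_forall fun z => abs_nonneg (v z)) hun hvn
  have hrpow : ∀ w : α → ℝ, (fun z => |w z| ^ (2:ℝ)) = fun z => w z ^ 2 := by
    intro w; funext z
    rw [show (2:ℝ) = ((2:ℕ):ℝ) by norm_num, Real.rpow_natCast, sq_abs]
  rw [hrpow u, hrpow v] at hH
  set A := ∫ z, u z ^ 2 ∂μ with hA
  set B := ∫ z, v z ^ 2 ∂μ with hB
  have hA0 : 0 ≤ A := integral_nonneg fun z => sq_nonneg _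
  have hB0 : 0 ≤ B := integral_nonneg fun z => sq_nonneg _
  have habs : |∫ z, u z * v z ∂μ| ≤ A ^ (1/2:ℝ) * B ^ (1/2:ℝ) := by
    calc |∫ z, u z * v z ∂μ| = ‖∫ z, u z * v z ∂μ‖ := (Real.norm_eq_abs _).symm
      _ ≤ ∫ z, ‖u z * v z‖ ∂μ := norm_integral_le_integral_norm _
      _ = ∫ z, |u z| * |v z| ∂μ := by simp [Real.norm_eq_abs, abs_mul]
      _ ≤ A ^ (1/2:ℝ) * B ^ (1/2:ℝ) := hH
  have hsq : (A ^ (1/2:ℝ) * B ^ (1/2:ℝ)) ^ 2 = A * B := by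
    rw [mul_pow, ← Real.rpow_natCast (A ^ (1/2:ℝ)) 2, ← Real.rpow_natCast (B ^ (1/2:ℝ)) 2,
      ← Real.rpow_mul hA0, ← Real.rpow_mul hB0]
    norm_num
  calc (∫ z, u z * v z ∂μ) ^ 2 = |∫ z, u z * v z ∂μ| ^ 2 := (sq_abs _).symm
    _ ≤ (A ^ (1/2:ℝ) * B ^ (1/2:ℝ)) ^ 2 := pow_le_pow_left₀ (abs_nonneg _) habs 2
    _ = A * B := hsq

private lemma my_mse_decomp {Ω : Type*} [MeasurableSpace Ω] {P : Measure Ω}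
    [IsProbabilityMeasure P] {W : Ω → ℝ} (hW : MemLp W 2 P) (V : ℝ) :
    ∫ ω, (W ω - V) ^ 2 ∂P
      = ProbabilityTheory.variance W P + ((∫ ω, W ω ∂P) - V) ^ 2 := by
  have hWi : Integrable W P := hW.integrable one_le_two
  have hW2 : Integrable (fun ω => W ω ^ 2) P := hW.integrable_sq
  rw [ProbabilityTheory.variance_eq_sub hW]
  have hint : ∫ ω, (W ω - V) ^ 2 ∂P
      = ∫ ω, W ω ^ 2 ∂P - 2 * V * ∫ ω, W ω ∂P + V ^ 2 := by
    calc ∫ ω, (W ω - V) ^ 2 ∂P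
        = ∫ ω, (W ω ^ 2 - 2 * V * W ω + V ^ 2) ∂P := by
          refine integral_congr_ae (Filter.Eventually.of_forall fun ω => by ring)
      _ = ∫ ω, (W ω ^ 2 - 2 * V * W ω) ∂P + ∫ _ω, V ^ 2 ∂P :=
          integral_add (hW2.sub (hWi.const_mul _)) (integrable_const _)
      _ = ∫ ω, W ω ^ 2 ∂P - ∫ ω, 2 * V * W ω ∂P + V ^ 2 := by
          rw [integral_sub hW2 (hWi.const_mul _)]; simp
      _ = _ := by rw [integral_const_mul]
  rw [hint]
  simp only [Pi.pow_apply]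
  ring

set_option maxHeartbeats 1000000 in
theorem stmt_2
    {X : Type*} [MeasurableSpace X] (p : Measure X) [IsProbabilityMeasure p]
    {A : Type*} [Fintype A] [Nonempty A] [MeasurableSpace A] [MeasurableSingletonClass A]
    (pol bstar bhat : X → A → ℝ)
    (hpol_meas : ∀ a, Measurable fun x => pol x a)
    (hbstar_meas : ∀ a, Measurable fun x => bstar x a)
    (hbhat_meas : ∀ a, Measurable fun x => bhat x a)
    (hpol_sum : ∀ x, ∑ a, pol x a = 1)
    (hbstar_sum : ∀ x, ∑ a, bstar x a = 1)
    (hbhat_sum : ∀ x, ∑ a, bhat x a = 1)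
    (hpol_nonneg : ∀ x a, 0 ≤ pol x a)
    (hbstar_pos : ∀ x a, 0 < bstar x a)
    (hbhat_pos : ∀ x a, 0 < bhat x a)
    (r : X × A → ℝ) (hr_meas : Measurable r)
    (hr0 : ∀ z, 0 ≤ r z) (hr1 : ∀ z, r z ≤ 1)
    (φ : X × A → ℝ) (hφ_meas : Measurable φ)
    {Ω : Type*} [MeasurableSpace Ω] (P : Measure Ω) [IsProbabilityMeasure P]
    (N : ℕ) (hN : 1 ≤ N)
    (S : Fin N → Ω → X × A) (hS_meas : ∀ n, Measurable (S n))
    (hS_indep : ProbabilityTheory.iIndepFun S P)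
    (μ : Measure (X × A)) [IsProbabilityMeasure μ]
    (hlaw : ∀ n, Measure.map (S n) P = μ)
    (hμ : ∀ g : X × A → ℝ, Integrable g μ →
      ∫ z, g z ∂μ = ∫ x, ∑ a, bstar x a * g (x, a) ∂p)
    (hL2a : MemLp (fun z : X × A => pol z.1 z.2 * φ z * r z / bhat z.1 z.2) 2 μ)
    (hL2b : MemLp (fun z : X × A => pol z.1 z.2 * φ z / bhat z.1 z.2) 2 μ)
    (hL2c : MemLp (fun z : X × A => pol z.1 z.2 / bstar z.1 z.2) 2 μ)
    (hL2d : MemLp (fun z : X × A => bstar z.1 z.2 / bhat z.1 z.2 * φ z - 1) 2 μ) :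
    (∫ ω, ((1 / (N : ℝ)) * ∑ n : Fin N,
          pol (S n ω).1 (S n ω).2 / bhat (S n ω).1 (S n ω).2 * φ (S n ω) * r (S n ω)
        - ∫ x, ∑ a, pol x a * r (x, a) ∂p) ^ 2 ∂P)
      ≤ (∫ x, ∑ a, bstar x a * ((pol x a / bstar x a) ^ 2 * r (x, a) ^ 2) ∂p)
          * (∫ x, ∑ a, bstar x a * (bstar x a / bhat x a * φ (x, a) - 1) ^ 2 ∂p)
        + ∫ x, ∑ a, bstar x a * ((pol x a / bhat x a) ^ 2 * φ (x, a) ^ 2) ∂p := by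
  classical
  -- measurability of coordinate functions
  have hpolm : Measurable fun z : X × A => pol z.1 z.2 :=
    measurable_from_prod_countable_left hpol_meas
  have hbstarm : Measurable fun z : X × A => bstar z.1 z.2 :=
    measurable_from_prod_countable_left hbstar_meas
  have hbhatm : Measurable fun z : X × A => bhat z.1 z.2 :=
    measurable_from_prod_countable_left hbhat_meas
  set g : X × A → ℝ := fun z => pol z.1 z.2 * φ z * r z / bhat z.1 z.2 with hgdef
  have hg_meas : Measurable g := ((hpolm.mul hφ_meas).mul hr_meas).div hbhatm
  set u : X × A → ℝ := fun z => pol z.1 z.2 / bstar z.1 z.2 * r z with hudef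
  set v : X × A → ℝ := fun z => bstar z.1 z.2 / bhat z.1 z.2 * φ z - 1 with hvdef
  have hu_meas : Measurable u := (hpolm.div hbstarm).mul hr_meas
  have hu_mem : MemLp u 2 μ := by
    refine hL2c.of_le hu_meas.aestronglyMeasurable
      (Filter.Eventually.of_forall fun z => ?_)
    simp only [hudef, Real.norm_eq_abs, abs_mul]
    have : |r z| ≤ 1 := abs_le.2 ⟨by linarith [hr0 z], hr1 z⟩
    calc |pol z.1 z.2 / bstar z.1 z.2| * |r z| ≤ |pol z.1 z.2 / bstar z.1 z.2| * 1 :=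
      mul_le_mul_of_nonneg_left this (abs_nonneg _)
      _ = _ := by rw [mul_one]
  have hv_mem : MemLp v 2 μ := hL2d
  -- the random variables
  set Y : Fin N → Ω → ℝ := fun n ω => g (S n ω) with hYdef
  have hY_mem : ∀ n, MemLp (Y n) 2 P := fun n => by
    refine (memLp_map_measure_iff hg_meas.aestronglyMeasurable
      (hS_meas n).aemeasurable).1 ?_
    rw [hlaw n]; exact hL2a
  set m : ℝ := ∫ z, g z ∂μ with hmdef
  have hEY : ∀ n, ∫ ω, Y n ω ∂P = m := fun n => by
    have := integral_map (μ := P) (hS_meas n).aemeasurable hg_meas.aestronglyMeasurable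
    rw [hlaw n] at this; exact this.symm
  have hEY2 : ∀ n, ∫ ω, Y n ω ^ 2 ∂P = ∫ z, g z ^ 2 ∂μ := fun n => by
    have := integral_map (μ := P) (hS_meas n).aemeasurable
      (f := fun z => g z ^ 2) (hg_meas.pow_const 2).aestronglyMeasurable
    rw [hlaw n] at this; exact this.symm
  have hg2_nonneg : (0:ℝ) ≤ ∫ z, g z ^ 2 ∂μ := integral_nonneg fun z => sq_nonneg _
  -- variance of each Y n
  have hvarY : ∀ n, ProbabilityTheory.variance (Y n) P ≤ ∫ z, g z ^ 2 ∂μ := fun n => by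
    rw [ProbabilityTheory.variance_eq_sub (hY_mem n)]
    simp only [Pi.pow_apply]
    rw [hEY2 n, hEY n]
    nlinarith [sq_nonneg m]
  -- the empirical mean
  set W : Ω → ℝ := fun ω => (1 / (N:ℝ)) * ∑ n : Fin N, Y n ω with hWdef
  have hW_mem : MemLp W 2 P := by
    have h0 : MemLp (∑ n : Fin N, Y n) 2 P :=
      memLp_finset_sum' (μ := P) (p := 2) Finset.univ (fun n _ => hY_mem n)
    have h1 := h0.const_mul (1 / (N:ℝ))
    have heq : W = fun ω => (1 / (N:ℝ)) * (∑ n : Fin N, Y n) ω := by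
      funext ω; simp [hWdef]
    rw [heq]; exact h1
  have hNpos : (0:ℝ) < N := by exact_mod_cast hN
  -- expectation of W
  have hEW : ∫ ω, W ω ∂P = m := by
    have hint : ∀ n : Fin N, Integrable (Y n) P := fun n => (hY_mem n).integrable one_le_two
    simp only [hWdef]
    rw [integral_const_mul, integral_finset_sum _ fun n _ => hint n]
    simp only [hEY]
    rw [Finset.sum_const, Finset.card_univ, Fintype.card_fin, nsmul_eq_mul]
    field_simp
  -- variance of W
  have hYindep : ∀ i j, i ≠ j → ProbabilityTheory.IndepFun (Y i) (Y j) P := by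
    intro i j hij
    exact (hS_indep.comp (fun _ => g) (fun _ => hg_meas)).indepFun hij
  have hvarW : ProbabilityTheory.variance W P ≤ ∫ z, g z ^ 2 ∂μ := by
    have hsum : ProbabilityTheory.variance (∑ n : Fin N, Y n) P
        = ∑ n : Fin N, ProbabilityTheory.variance (Y n) P :=
      ProbabilityTheory.IndepFun.variance_sum (fun n _ => hY_mem n)
        (fun i _ j _ hij => hYindep i j hij)
    have hWform : W = fun ω => (1 / (N:ℝ)) * (∑ n : Fin N, Y n) ω := by
      funext ω; simp [hWdef]
    rw [hWform, ProbabilityTheory.variance_const_mul, hsum]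
    have hb : ∑ n : Fin N, ProbabilityTheory.variance (Y n) P
        ≤ (N:ℝ) * ∫ z, g z ^ 2 ∂μ := by
      calc ∑ n : Fin N, ProbabilityTheory.variance (Y n) P
          ≤ ∑ _n : Fin N, ∫ z, g z ^ 2 ∂μ := Finset.sum_le_sum fun n _ => hvarY n
        _ = (N:ℝ) * ∫ z, g z ^ 2 ∂μ := by
            rw [Finset.sum_const, Finset.card_univ, Fintype.card_fin]; ring
    calc (1 / (N:ℝ)) ^ 2 * ∑ n : Fin N, ProbabilityTheory.variance (Y n) P
        ≤ (1 / (N:ℝ)) ^ 2 * ((N:ℝ) * ∫ z, g z ^ 2 ∂μ) := by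
          apply mul_le_mul_of_nonneg_left hb (by positivity)
      _ = (1 / (N:ℝ)) * ∫ z, g z ^ 2 ∂μ := by field_simp
      _ ≤ 1 * ∫ z, g z ^ 2 ∂μ := by
          apply mul_le_mul_of_nonneg_right _ hg2_nonneg
          rw [div_le_one hNpos]; exact_mod_cast hN
      _ = ∫ z, g z ^ 2 ∂μ := one_mul _
  -- bound on second moment
  have hg2_le : ∫ z, g z ^ 2 ∂μ
      ≤ ∫ x, ∑ a, bstar x a * ((pol x a / bhat x a) ^ 2 * φ (x, a) ^ 2) ∂p := by
    have h1 : ∫ z, g z ^ 2 ∂μ ≤ ∫ z, (pol z.1 z.2 * φ z / bhat z.1 z.2) ^ 2 ∂μ := by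
      refine integral_mono hL2a.integrable_sq hL2b.integrable_sq fun z => ?_
      have hgz : g z ^ 2 = (pol z.1 z.2 * φ z / bhat z.1 z.2) ^ 2 * r z ^ 2 := by
        simp only [hgdef]; ring
      have hr2 : r z ^ 2 ≤ 1 := by nlinarith [hr0 z, hr1 z]
      calc g z ^ 2 = (pol z.1 z.2 * φ z / bhat z.1 z.2) ^ 2 * r z ^ 2 := hgz
        _ ≤ (pol z.1 z.2 * φ z / bhat z.1 z.2) ^ 2 * 1 :=
          mul_le_mul_of_nonneg_left hr2 (sq_nonneg _)
        _ = _ := mul_one _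
    have h2 : ∫ z, (pol z.1 z.2 * φ z / bhat z.1 z.2) ^ 2 ∂μ
        = ∫ x, ∑ a, bstar x a * ((pol x a / bhat x a) ^ 2 * φ (x, a) ^ 2) ∂p := by
      rw [hμ _ hL2b.integrable_sq]
      refine integral_congr_ae (Filter.Eventually.of_forall fun x => ?_)
      refine Finset.sum_congr rfl fun a _ => ?_
      ring
    linarith
  -- bias term
  set V : ℝ := ∫ x, ∑ a, pol x a * r (x, a) ∂p with hVdef
  have hV : V = ∫ z, u z ∂μ := by
    rw [hμ u (hu_mem.integrable one_le_two)]
    refine integral_congr_ae (Filter.Eventually.of_forall fun x => ?_)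
    refine Finset.sum_congr rfl fun a _ => ?_
    have hb : bstar x a ≠ 0 := (hbstar_pos x a).ne'
    simp only [hudef]
    field_simp
  have hbias : m - V = ∫ z, u z * v z ∂μ := by
    rw [hV, hmdef, ← integral_sub (hL2a.integrable one_le_two) (hu_mem.integrable one_le_two)]
    refine integral_congr_ae (Filter.Eventually.of_forall fun z => ?_)
    have hb : bstar z.1 z.2 ≠ 0 := (hbstar_pos z.1 z.2).ne'
    have hh : bhat z.1 z.2 ≠ 0 := (hbhat_pos z.1 z.2).ne'
    simp only [hgdef, hudef, hvdef]
    field_simp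
  have hbias_sq : (m - V) ^ 2
      ≤ (∫ x, ∑ a, bstar x a * ((pol x a / bstar x a) ^ 2 * r (x, a) ^ 2) ∂p)
        * (∫ x, ∑ a, bstar x a * (bstar x a / bhat x a * φ (x, a) - 1) ^ 2 ∂p) := by
    have hcs := my_cauchy_schwarz hu_mem hv_mem
    have hu2 : ∫ z, u z ^ 2 ∂μ
        = ∫ x, ∑ a, bstar x a * ((pol x a / bstar x a) ^ 2 * r (x, a) ^ 2) ∂p := by
      rw [hμ _ hu_mem.integrable_sq]
      refine integral_congr_ae (Filter.Eventually.of_forall fun x => ?_)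
      refine Finset.sum_congr rfl fun a _ => ?_
      simp only [hudef]; ring
    have hv2 : ∫ z, v z ^ 2 ∂μ
        = ∫ x, ∑ a, bstar x a * (bstar x a / bhat x a * φ (x, a) - 1) ^ 2 ∂p := by
      rw [hμ _ hv_mem.integrable_sq]
    rw [hbias, ← hu2, ← hv2]
    exact hcs
  -- put everything together
  have hfun : (fun ω => ((1 / (N : ℝ)) * ∑ n : Fin N,
          pol (S n ω).1 (S n ω).2 / bhat (S n ω).1 (S n ω).2 * φ (S n ω) * r (S n ω)
        - V) ^ 2) = fun ω => (W ω - V) ^ 2 := by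
    funext ω
    have hsum : ∑ n : Fin N,
          pol (S n ω).1 (S n ω).2 / bhat (S n ω).1 (S n ω).2 * φ (S n ω) * r (S n ω)
        = ∑ n : Fin N, Y n ω :=
      Finset.sum_congr rfl fun n _ => by simp only [hYdef, hgdef]; ring
    simp only [hWdef, hsum]
  have hLHS : (∫ ω, ((1 / (N : ℝ)) * ∑ n : Fin N,
          pol (S n ω).1 (S n ω).2 / bhat (S n ω).1 (S n ω).2 * φ (S n ω) * r (S n ω)
        - V) ^ 2 ∂P) = ∫ ω, (W ω - V) ^ 2 ∂P := by rw [hfun]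
  rw [hLHS, my_mse_decomp hW_mem V, hEW]
  have := add_le_add hbias_sq hvarW
  calc ProbabilityTheory.variance W P + (m - V) ^ 2
      ≤ (∫ z, g z ^ 2 ∂μ) + (m - V) ^ 2 := by linarith [hvarW]
    _ ≤ (∫ x, ∑ a, bstar x a * ((pol x a / bstar x a) ^ 2 * r (x, a) ^ 2) ∂p)
          * (∫ x, ∑ a, bstar x a * (bstar x a / bhat x a * φ (x, a) - 1) ^ 2 ∂p)
        + ∫ x, ∑ a, bstar x a * ((pol x a / bhat x a) ^ 2 * φ (x, a) ^ 2) ∂p := by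
      linarith [hg2_le, hbias_sq]
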